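/- Let n = m(q−1) with m ≥ 1. There exists a unique polynomial g_n ∈ 𝔽[θ,t] such that ‖g_n − ω_n‖ < 1. Moreover, deg_θ(g_n) = m, and g_{pn} = (g_n)^p (where g_{pn} is the unique polynomial in 𝔽[θ,t] with ‖g_{pn} − ω_{pn}‖ < 1). -/

import Mathlib

open scoped Classical ENNReal
open Filter

noncomputable section

namespace Carlitz

variable (F : Type) [Field F] [Fintype F]

/-- `K∞ = 𝔽((1/θ))`, realized as the field of formal Laurent series over `F`;
the Laurent-series variable plays the role of `1/θ`. -/
abbrev Kinf := LaurentSeries F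

/-- `θ ∈ K∞`, the inverse of the Laurent-series variable. -/
def theta : Kinf F := HahnSeries.single (-1 : ℤ) (1 : F)

/-- The absolute value `|x| = q ^ (deg_θ x)`, with values in `ℝ≥0∞`. -/
def Kabs {R : Type} [Zero R] (q : ℕ) (x : HahnSeries ℤ R) : ℝ≥0∞ :=
  if x = 0 then 0 else (q : ℝ≥0∞) ^ (-x.order)

/-- The ambient ring of the Tate algebra: formal power series in `t` over `K∞`. -/
abbrev TS := PowerSeries (Kinf F)

/-- The `i`-th `t`-coefficient. -/
def coeffT (i : ℕ) (f : TS F) : Kinf F := PowerSeries.coeff (R := Kinf F) i f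

/-- Membership in the Tate algebra `K∞⟨t⟩`: the coefficients tend to `0`. -/
def IsTate (f : TS F) : Prop :=
  Tendsto (fun i => Kabs (Fintype.card F) (coeffT F i f)) atTop (nhds 0)

/-- The Gauss norm `‖f‖ = sup_i |a_i|`. -/
def gnorm (f : TS F) : ℝ≥0∞ := ⨆ i, Kabs (Fintype.card F) (coeffT F i f)

/-- The twist `f ↦ f⁽¹⁾`: the coefficientwise `q`-power Frobenius. -/
def twist (f : TS F) : TS F := PowerSeries.mk fun i => coeffT F i f ^ Fintype.card F

/-- The iterated twist `f ↦ f⁽ᵏ⁾`. -/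
def twistIter (k : ℕ) (f : TS F) : TS F := (twist F)^[k] f

/-- The variable `t` of the Tate algebra. -/
def tt : TS F := PowerSeries.X

/-- `θ`, viewed as a constant of `K∞⟨t⟩`. -/
def th : TS F := PowerSeries.C (R := Kinf F) (theta F)

/-- The embedding `𝔽[θ] → K∞` sending the polynomial variable to `θ`. -/
def polyK : Polynomial F →+* Kinf F :=
  Polynomial.eval₂RingHom (HahnSeries.C : F →+* Kinf F) (theta F)

/-- The embedding `𝔽[θ][t] → K∞⟨t⟩`: the outer variable goes to `t`,
the inner variable goes to `θ`. -/
def polyT : Polynomial (Polynomial F) →+* TS F :=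
  Polynomial.eval₂RingHom ((PowerSeries.C (R := Kinf F)).comp (polyK F)) PowerSeries.X

/-- The subring `𝔽[θ,t] ⊆ K∞⟨t⟩`. -/
def PolyTT : Set (TS F) := Set.range (polyT F)

/-- The subset of `𝔽[θ,t]` of elements of `θ`-degree `< n`. -/
def PolyDegLt (n : ℕ) : Set (TS F) :=
  {f | ∃ P : Polynomial (Polynomial F), (∀ i, (P.coeff i).degree < (n : ℕ)) ∧ f = polyT F P}

/-- The action of `𝔽[t]` on `K∞⟨t⟩`: `a • f` is `actT a * f`. -/
def actT : Polynomial F →+* TS F :=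
  Polynomial.eval₂RingHom ((PowerSeries.C (R := Kinf F)).comp (HahnSeries.C : F →+* Kinf F))
    PowerSeries.X

/-- Convergence in `K∞⟨t⟩` with respect to the Gauss norm:
`L` is the limit of the sequence `s`. -/
def TT (s : ℕ → TS F) (L : TS F) : Prop :=
  Tendsto (fun N => gnorm F (L - s N)) atTop (nhds 0)

/-- Convergence in `K∞`: `L` is the limit of the sequence `s`. -/
def KT (q : ℕ) (s : ℕ → Kinf F) (L : Kinf F) : Prop :=
  Tendsto (fun N => Kabs q (L - s N)) atTop (nhds 0)

/-- Partial products defining `ν_n = (−θ)^{−h} ∏_{j≥0} (1 − t·θ^{−qʲ})ⁿ`,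
where `n = h(q−1) + δ`. -/
def nuPartial (n h N : ℕ) : TS F :=
  PowerSeries.C (R := Kinf F) ((-theta F)⁻¹ ^ h) *
    ∏ j ∈ Finset.range N,
      (1 - tt F * PowerSeries.C (R := Kinf F) ((theta F)⁻¹ ^ Fintype.card F ^ j)) ^ n

/-- Partial products defining `ω_n = (−θ)^m ∏_{i≥0} (1 − t·θ^{−qⁱ})^{−n}`,
where `n = m(q−1)`; `ω_n` is the `n`-th power of the Anderson–Thakur function. -/
def omegaPartial (n m N : ℕ) : TS F :=
  PowerSeries.C (R := Kinf F) ((-theta F) ^ m) *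
    ∏ i ∈ Finset.range N,
      ((1 - tt F * PowerSeries.C (R := Kinf F) ((theta F)⁻¹ ^ Fintype.card F ^ i)) ^ n)⁻¹

/-- Partial sums defining `ξ_e = ∑_{k≥0} e⁽ᵏ⁾ ∏_{i=0}^{k} (t−θ^{qⁱ})^{−n}`. -/
def xiPartial (n : ℕ) (e : TS F) (N : ℕ) : TS F :=
  ∑ k ∈ Finset.range N, twistIter F k e *
    (∏ i ∈ Finset.range (k + 1),
      (tt F - PowerSeries.C (R := Kinf F) (theta F ^ Fintype.card F ^ i)) ^ n)⁻¹

/-- Partial sums defining `s_h = h + ∑_{i≥1} h⁽ⁱ⁾ ∏_{j=0}^{i−1} (t−θ^{qʲ})^{−n}`. -/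
def sPartial (n : ℕ) (h : TS F) (N : ℕ) : TS F :=
  ∑ i ∈ Finset.range N, twistIter F i h *
    (∏ j ∈ Finset.range i,
      (tt F - PowerSeries.C (R := Kinf F) (theta F ^ Fintype.card F ^ j)) ^ n)⁻¹

/-- The map `β : f ↦ f − (t−θ)ⁿ f⁽¹⁾`. -/
def beta (n : ℕ) (f : TS F) : TS F := f - (tt F - th F) ^ n * twist F f

/-- The set of integral extension representatives
`X_n = {ξ ∈ K∞⟨t⟩ : (t−θ)ⁿ ξ − ξ⁽¹⁾ ∈ 𝔽[θ,t]}`. -/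
def Xset (n : ℕ) : Set (TS F) :=
  {ξ | IsTate F ξ ∧ (tt F - th F) ^ n * ξ - twist F ξ ∈ PolyTT F}

section Aux

variable {F}

lemma zpow_lt_zpow_int {x : ℝ≥0∞} (h1 : 1 < x) (ht : x ≠ ∞) {a b : ℤ} (h : a < b) :
    x ^ a < x ^ b := by
  have h0 : x ≠ 0 := (zero_lt_one.trans h1).ne'
  have hb : x ^ b = x ^ a * x ^ (b - a) := by
    rw [← ENNReal.zpow_add h0 ht]; congr 1; omega
  have h2 : 1 < x ^ (b - a) := by
    calc (1:ℝ≥0∞) < x := h1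
    _ = x ^ (1:ℤ) := (zpow_one x).symm
    _ ≤ x ^ (b - a) := ENNReal.zpow_le_of_le h1.le (by omega)
  calc x ^ a = x ^ a * 1 := (mul_one _).symm
  _ < x ^ a * x ^ (b-a) :=
      ENNReal.mul_lt_mul_right (ENNReal.zpow_pos h0 ht a).ne'
        (ENNReal.zpow_lt_top h0 ht a).ne h2
  _ = x ^ b := hb.symm

lemma Kabs_zero (q : ℕ) : Kabs q (0 : Kinf F) = 0 := if_pos rfl

lemma Kabs_of_ne {q : ℕ} {x : Kinf F} (h : x ≠ 0) :
    Kabs q x = (q:ℝ≥0∞) ^ (-x.order) := if_neg h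

lemma Kabs_neg (q : ℕ) (x : Kinf F) : Kabs q (-x) = Kabs q x := by
  unfold Kabs; rw [neg_eq_zero, HahnSeries.order_neg]

lemma Kabs_mul {q : ℕ} (h0 : (q:ℝ≥0∞) ≠ 0) (ht : (q:ℝ≥0∞) ≠ ∞) (x y : Kinf F) :
    Kabs q (x * y) = Kabs q x * Kabs q y := by
  by_cases hx : x = 0
  · simp [hx, Kabs_zero]
  by_cases hy : y = 0
  · simp [hy, Kabs_zero]
  rw [Kabs_of_ne hx, Kabs_of_ne hy, Kabs_of_ne (mul_ne_zero hx hy),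
    HahnSeries.order_mul hx hy, neg_add, ENNReal.zpow_add h0 ht]

lemma Kabs_one (q : ℕ) : Kabs q (1 : Kinf F) = 1 := by
  rw [Kabs_of_ne one_ne_zero, HahnSeries.order_one, neg_zero, zpow_zero]

lemma Kabs_pow {q : ℕ} (h0 : (q:ℝ≥0∞) ≠ 0) (ht : (q:ℝ≥0∞) ≠ ∞) (x : Kinf F) (k : ℕ) :
    Kabs q (x ^ k) = (Kabs q x) ^ k := by
  induction k with
  | zero => simp [Kabs_one]
  | succ k ih => rw [pow_succ, Kabs_mul h0 ht, ih, pow_succ]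

lemma Kabs_add_le {q : ℕ} (hq : 1 ≤ (q:ℝ≥0∞)) (x y : Kinf F) :
    Kabs q (x + y) ≤ max (Kabs q x) (Kabs q y) := by
  by_cases hxy : x + y = 0
  · simp [hxy, Kabs_zero]
  by_cases hx : x = 0
  · simp only [hx, zero_add]; exact le_max_right _ _
  by_cases hy : y = 0
  · simp only [hy, add_zero]; exact le_max_left _ _
  have horder := HahnSeries.min_order_le_order_add hxy
  rcases le_total x.order y.order with h | h
  · refine le_max_of_le_left ?_
    rw [Kabs_of_ne hxy, Kabs_of_ne hx]
    refine ENNReal.zpow_le_of_le hq ?_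
    have : x.order ≤ (x+y).order := le_trans (by simp [min_eq_left h]) horder
    omega
  · refine le_max_of_le_right ?_
    rw [Kabs_of_ne hxy, Kabs_of_ne hy]
    refine ENNReal.zpow_le_of_le hq ?_
    have : y.order ≤ (x+y).order := le_trans (by simp [min_eq_right h]) horder
    omega

lemma Kabs_sum_le {q : ℕ} {ι : Type*} {s : Finset ι} {f : ι → Kinf F} {c : ℝ≥0∞}
    (hq : 1 ≤ (q:ℝ≥0∞)) (h : ∀ i ∈ s, Kabs q (f i) ≤ c) :
    Kabs q (∑ i ∈ s, f i) ≤ c := by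
  classical
  induction s using Finset.cons_induction with
  | empty => simp [Kabs_zero]
  | cons a s ha ih =>
      rw [Finset.sum_cons]
      exact le_trans (Kabs_add_le hq _ _)
        (max_le (h a (Finset.mem_cons_self a s))
          (ih fun i hi => h i (Finset.mem_cons_of_mem hi)))

lemma Kabs_coeff_vanish {q : ℕ} (hq1 : 1 < (q:ℝ≥0∞)) (ht : (q:ℝ≥0∞) ≠ ∞)
    {x : Kinf F} {d : ℤ} (h : Kabs q x ≤ (q:ℝ≥0∞) ^ d) {z : ℤ} (hz : z < -d) :
    x.coeff z = 0 := by
  by_cases hx : x = 0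
  · simp [hx]
  apply HahnSeries.coeff_eq_zero_of_lt_order
  rw [Kabs_of_ne hx] at h
  have hod : -x.order ≤ d := by
    by_contra hcon
    push_neg at hcon
    exact absurd h (not_le.mpr (zpow_lt_zpow_int hq1 ht hcon))
  omega

lemma Kabs_le_inv {q : ℕ} (hq1 : 1 ≤ (q:ℝ≥0∞)) {x : Kinf F}
    (h : ∀ z : ℤ, z ≤ 0 → x.coeff z = 0) : Kabs q x ≤ ((q:ℝ≥0∞))⁻¹ := by
  by_cases hx : x = 0
  · simp [hx, Kabs_zero]
  have ho : 1 ≤ x.order := by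
    by_contra hc
    push_neg at hc
    exact (mt HahnSeries.coeff_order_eq_zero.mp hx) (h _ (by omega))
  rw [Kabs_of_ne hx]
  calc (q:ℝ≥0∞) ^ (-x.order) ≤ (q:ℝ≥0∞) ^ (-1 : ℤ) :=
        ENNReal.zpow_le_of_le hq1 (by omega)
  _ = ((q:ℝ≥0∞))⁻¹ := zpow_neg_one _

lemma Kabs_lt_one_coeff {q : ℕ} (hq1 : 1 ≤ (q:ℝ≥0∞)) {x : Kinf F}
    (h : Kabs q x < 1) {z : ℤ} (hz : z ≤ 0) : x.coeff z = 0 := by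
  by_cases hx : x = 0
  · simp [hx]
  apply HahnSeries.coeff_eq_zero_of_lt_order
  rw [Kabs_of_ne hx] at h
  have : ¬ (0 ≤ -x.order) := by
    intro hcon
    have h1 : (q:ℝ≥0∞) ^ (0:ℤ) ≤ (q:ℝ≥0∞) ^ (-x.order) := ENNReal.zpow_le_of_le hq1 hcon
    rw [zpow_zero] at h1
    exact absurd h (not_lt.mpr h1)
  omega

lemma Kabs_lt_one_le_inv {q : ℕ} (hq1 : 1 ≤ (q:ℝ≥0∞)) {x : Kinf F}
    (h : Kabs q x < 1) : Kabs q x ≤ ((q:ℝ≥0∞))⁻¹ :=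
  Kabs_le_inv hq1 fun _ hz => Kabs_lt_one_coeff hq1 h hz

lemma Kabs_single {q : ℕ} {a : ℤ} {c : F} (hc : c ≠ 0) :
    Kabs q (HahnSeries.single a c : Kinf F) = (q:ℝ≥0∞) ^ (-a) := by
  rw [Kabs_of_ne (HahnSeries.single_ne_zero hc), HahnSeries.order_single hc]

end Aux
section Aux2
set_option linter.unusedSectionVars false
variable {F}

lemma coeffT_add (i : ℕ) (f g : TS F) : coeffT F i (f + g) = coeffT F i f + coeffT F i g := by
  unfold coeffT; simp

lemma coeffT_sub (i : ℕ) (f g : TS F) : coeffT F i (f - g) = coeffT F i f - coeffT F i g := by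
  unfold coeffT; simp

lemma Kabs_coeff_le_gnorm (i : ℕ) (f : TS F) :
    Kabs (Fintype.card F) (coeffT F i f) ≤ gnorm F f :=
  le_iSup (fun j => Kabs (Fintype.card F) (coeffT F j f)) i

lemma gnorm_le_iff {f : TS F} {c : ℝ≥0∞} :
    gnorm F f ≤ c ↔ ∀ i, Kabs (Fintype.card F) (coeffT F i f) ≤ c := by
  unfold gnorm; exact iSup_le_iff

lemma gnorm_neg (f : TS F) : gnorm F (-f) = gnorm F f := by
  unfold gnorm
  refine iSup_congr fun i => ?_
  have : coeffT F i (-f) = -(coeffT F i f) := by unfold coeffT; simp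
  rw [this, Kabs_neg]

lemma gnorm_add_le (hq : 1 ≤ ((Fintype.card F : ℕ):ℝ≥0∞)) (f g : TS F) :
    gnorm F (f + g) ≤ max (gnorm F f) (gnorm F g) := by
  refine gnorm_le_iff.mpr fun i => ?_
  rw [coeffT_add]
  exact le_trans (Kabs_add_le hq _ _)
    (max_le_max (Kabs_coeff_le_gnorm i f) (Kabs_coeff_le_gnorm i g))

lemma gnorm_sub_le (hq : 1 ≤ ((Fintype.card F : ℕ):ℝ≥0∞)) (f g : TS F) :
    gnorm F (f - g) ≤ max (gnorm F f) (gnorm F g) := by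
  have := gnorm_add_le hq f (-g)
  rwa [gnorm_neg g, ← sub_eq_add_neg] at this

lemma gnorm_mul_le (hq : 1 < ((Fintype.card F : ℕ):ℝ≥0∞)) (ht : ((Fintype.card F : ℕ):ℝ≥0∞) ≠ ∞)
    (f g : TS F) : gnorm F (f * g) ≤ gnorm F f * gnorm F g := by
  have h0 : ((Fintype.card F : ℕ):ℝ≥0∞) ≠ 0 := (zero_lt_one.trans hq).ne'
  refine gnorm_le_iff.mpr fun i => ?_
  have : coeffT F i (f * g) =
      ∑ p ∈ Finset.HasAntidiagonal.antidiagonal i, coeffT F p.1 f * coeffT F p.2 g := by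
    unfold coeffT; exact PowerSeries.coeff_mul i f g
  rw [this]
  refine Kabs_sum_le hq.le fun p _ => ?_
  rw [Kabs_mul h0 ht]
  exact mul_le_mul' (Kabs_coeff_le_gnorm _ f) (Kabs_coeff_le_gnorm _ g)

lemma gnorm_one_le : gnorm F (1 : TS F) ≤ 1 := by
  refine gnorm_le_iff.mpr fun i => ?_
  have : coeffT F i (1 : TS F) = if i = 0 then 1 else 0 := PowerSeries.coeff_one i
  rw [this]
  split
  · rw [Kabs_one]
  · rw [Kabs_zero]; exact zero_le_one

lemma gnorm_pow_le (hq : 1 < ((Fintype.card F : ℕ):ℝ≥0∞)) (ht : ((Fintype.card F : ℕ):ℝ≥0∞) ≠ ∞)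
    (f : TS F) (n : ℕ) : gnorm F (f ^ n) ≤ gnorm F f ^ n := by
  induction n with
  | zero => simpa using gnorm_one_le
  | succ n ih =>
      rw [pow_succ, pow_succ]
      exact le_trans (gnorm_mul_le hq ht _ _) (mul_le_mul' ih le_rfl)

lemma gnorm_prod_le_one (hq : 1 < ((Fintype.card F : ℕ):ℝ≥0∞))
    (ht : ((Fintype.card F : ℕ):ℝ≥0∞) ≠ ∞) {ι : Type*} {s : Finset ι} {f : ι → TS F}
    (h : ∀ i ∈ s, gnorm F (f i) ≤ 1) : gnorm F (∏ i ∈ s, f i) ≤ 1 := by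
  classical
  induction s using Finset.cons_induction with
  | empty => simpa using gnorm_one_le
  | cons a s ha ih =>
      rw [Finset.prod_cons]
      calc gnorm F (f a * ∏ i ∈ s, f i) ≤ gnorm F (f a) * gnorm F (∏ i ∈ s, f i) :=
            gnorm_mul_le hq ht _ _
      _ ≤ 1 * 1 := mul_le_mul' (h a (Finset.mem_cons_self a s))
            (ih fun i hi => h i (Finset.mem_cons_of_mem hi))
      _ = 1 := one_mul 1

lemma gnorm_C_mul_le (hq : 1 < ((Fintype.card F : ℕ):ℝ≥0∞))
    (ht : ((Fintype.card F : ℕ):ℝ≥0∞) ≠ ∞) (c : Kinf F) (f : TS F) :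
    gnorm F (PowerSeries.C (R := Kinf F) c * f) ≤ Kabs (Fintype.card F) c * gnorm F f := by
  have h0 : ((Fintype.card F : ℕ):ℝ≥0∞) ≠ 0 := (zero_lt_one.trans hq).ne'
  refine gnorm_le_iff.mpr fun i => ?_
  have : coeffT F i (PowerSeries.C (R := Kinf F) c * f) = c * coeffT F i f :=
    PowerSeries.coeff_C_mul i f c
  rw [this, Kabs_mul h0 ht]
  exact mul_le_mul' le_rfl (Kabs_coeff_le_gnorm i f)

-- theta facts
lemma theta_pow (i : ℕ) : (theta F) ^ i = HahnSeries.single (-(i:ℤ)) (1:F) := by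
  rw [theta, HahnSeries.single_pow]
  congr 1
  · simp
  · simp

lemma neg_theta_eq : -theta F = HahnSeries.single (-1 : ℤ) (-1 : F) := by
  ext z
  rw [theta, HahnSeries.coeff_neg, HahnSeries.coeff_single, HahnSeries.coeff_single]
  split <;> simp

lemma neg_theta_pow (k : ℕ) : (-theta F) ^ k = HahnSeries.single (-(k:ℤ)) ((-1:F) ^ k) := by
  rw [neg_theta_eq, HahnSeries.single_pow]
  congr 1
  simp

lemma C_mul_theta_pow (a : F) (i : ℕ) :
    (HahnSeries.C a : Kinf F) * theta F ^ i = HahnSeries.single (-(i:ℤ)) a := by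
  rw [theta_pow]
  show HahnSeries.single (0:ℤ) a * _ = _
  rw [HahnSeries.single_mul_single, zero_add, mul_one]

lemma polyK_coeff (R : Polynomial F) (z : ℤ) :
    (polyK F R).coeff z = if z ≤ 0 then R.coeff (-z).toNat else 0 := by
  have hrep : polyK F R = R.eval₂ HahnSeries.C (theta F) := rfl
  rw [hrep, Polynomial.eval₂_eq_sum_range]
  have hco : (∑ i ∈ Finset.range (R.natDegree + 1),
      (HahnSeries.C (R.coeff i) : Kinf F) * theta F ^ i).coeff z
      = ∑ i ∈ Finset.range (R.natDegree + 1),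
        ((HahnSeries.C (R.coeff i) : Kinf F) * theta F ^ i).coeff z :=
    map_sum (HahnSeries.coeff.addMonoidHom z) _ _
  rw [hco]
  by_cases hz : z ≤ 0
  · rw [if_pos hz]
    have : ∀ i ∈ Finset.range (R.natDegree + 1),
        ((HahnSeries.C (R.coeff i) : Kinf F) * theta F ^ i).coeff z
        = if i = (-z).toNat then R.coeff i else 0 := by
      intro i _
      rw [C_mul_theta_pow, HahnSeries.coeff_single]
      have : (z = -(i:ℤ)) ↔ (i = (-z).toNat) := by omega
      simp only [this]
    rw [Finset.sum_congr rfl this, Finset.sum_ite_eq' (Finset.range (R.natDegree + 1))]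
    split
    · rfl
    · rename_i hmem
      rw [Finset.mem_range] at hmem
      exact (Polynomial.coeff_eq_zero_of_natDegree_lt (by omega)).symm
  · rw [if_neg hz]
    refine Finset.sum_eq_zero fun i _ => ?_
    rw [C_mul_theta_pow, HahnSeries.coeff_single, if_neg (by omega)]

lemma polyT_coeff (P : Polynomial (Polynomial F)) (k : ℕ) :
    coeffT F k (polyT F P) = polyK F (P.coeff k) := by
  have hrep : polyT F P = P.eval₂ ((PowerSeries.C (R := Kinf F)).comp (polyK F)) PowerSeries.X := rfl
  unfold coeffT
  rw [hrep, Polynomial.eval₂_eq_sum_range, map_sum]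
  have : ∀ i ∈ Finset.range (P.natDegree + 1),
      (PowerSeries.coeff (R := Kinf F) k)
        (((PowerSeries.C (R := Kinf F)).comp (polyK F)) (P.coeff i) * PowerSeries.X ^ i)
      = if k = i then polyK F (P.coeff i) else 0 := by
    intro i _
    rw [RingHom.comp_apply, PowerSeries.coeff_C_mul, PowerSeries.coeff_X_pow]
    split <;> simp
  rw [Finset.sum_congr rfl this, Finset.sum_ite_eq (Finset.range (P.natDegree + 1))]
  split
  · rfl
  · rename_i hmem
    rw [Finset.mem_range] at hmem
    rw [Polynomial.coeff_eq_zero_of_natDegree_lt (by omega), map_zero]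

end Aux2
section Aux3
set_option linter.unusedSectionVars false
variable {F}

/-- Truncation: the polynomial part of a Laurent series, reading coefficients
at indices `-d, …, 0`. -/
def truncB (d : ℕ) (x : Kinf F) : Polynomial F :=
  ∑ i ∈ Finset.range (d+1), Polynomial.monomial i (x.coeff (-(i:ℤ)))

lemma truncB_coeff (d : ℕ) (x : Kinf F) (i : ℕ) :
    (truncB d x).coeff i = if i ≤ d then x.coeff (-(i:ℤ)) else 0 := by
  unfold truncB
  rw [Polynomial.finset_sum_coeff]
  have : ∀ j ∈ Finset.range (d+1),
      (Polynomial.monomial j (x.coeff (-(j:ℤ)))).coeff i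
      = if j = i then x.coeff (-(j:ℤ)) else 0 := fun j _ => Polynomial.coeff_monomial
  rw [Finset.sum_congr rfl this, Finset.sum_ite_eq' (Finset.range (d+1))]
  simp only [Finset.mem_range]
  split <;> split <;> first | rfl | omega

lemma truncB_degree_le (d : ℕ) (x : Kinf F) : (truncB d x).degree ≤ (d : ℕ) := by
  unfold truncB
  refine le_trans (Polynomial.degree_sum_le _ _) ?_
  refine Finset.sup_le fun i hi => ?_
  refine le_trans (Polynomial.degree_monomial_le i _) ?_
  rw [Finset.mem_range] at hi
  exact_mod_cast Nat.lt_succ_iff.mp hi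

lemma sub_polyK_truncB_coeff (d : ℕ) {x : Kinf F}
    (hx : ∀ z : ℤ, z < -(d:ℤ) → x.coeff z = 0) :
    ∀ z : ℤ, z ≤ 0 → (x - polyK F (truncB d x)).coeff z = 0 := by
  intro z hz
  rw [HahnSeries.coeff_sub, polyK_coeff, truncB_coeff, if_pos hz]
  by_cases hd : (-z).toNat ≤ d
  · rw [if_pos hd]
    have : -((-z).toNat : ℤ) = z := by omega
    rw [this, sub_self]
  · rw [if_neg hd, hx z (by omega), sub_zero]

/-- `ω`, helpers for geometric series. -/
lemma one_sub_mul_geom (c : Kinf F) :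
    (1 - tt F * PowerSeries.C (R := Kinf F) c) * (PowerSeries.mk fun k => c ^ k) = 1 := by
  have : (1 - tt F * PowerSeries.C (R := Kinf F) c) * (PowerSeries.mk fun k => c ^ k)
      = (PowerSeries.mk fun k => c ^ k)
        - (PowerSeries.C (R := Kinf F) c * PowerSeries.mk fun k => c ^ k) * PowerSeries.X := by
    rw [tt]; ring
  rw [this]
  ext k
  cases k with
  | zero =>
      simp [PowerSeries.coeff_zero_mul_X]
  | succ k =>
      rw [map_sub, PowerSeries.coeff_succ_mul_X, PowerSeries.coeff_C_mul,
        PowerSeries.coeff_mk, PowerSeries.coeff_mk, PowerSeries.coeff_one]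
      rw [← pow_succ']
      simp

lemma inv_pow_eq {f g : TS F} (h : f * g = 1) (n : ℕ) : ((f ^ n)⁻¹ : TS F) = g ^ n := by
  have hc : PowerSeries.constantCoeff (R := Kinf F) (f ^ n) ≠ 0 := by
    rw [map_pow]
    refine pow_ne_zero n ?_
    have : PowerSeries.constantCoeff (R := Kinf F) f * PowerSeries.constantCoeff (R := Kinf F) g = 1 := by
      rw [← map_mul, h, map_one]
    exact left_ne_zero_of_mul_eq_one this
  symm
  rw [PowerSeries.eq_inv_iff_mul_eq_one hc, ← mul_pow, mul_comm g f, h, one_pow]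

lemma geom_pow_inv (c : Kinf F) (n : ℕ) :
    (((1 - tt F * PowerSeries.C (R := Kinf F) c) ^ n)⁻¹ : TS F)
      = (PowerSeries.mk fun k => c ^ k) ^ n :=
  inv_pow_eq (one_sub_mul_geom c) n

lemma gnorm_geom_le (hq : 1 < ((Fintype.card F : ℕ):ℝ≥0∞))
    (ht : ((Fintype.card F : ℕ):ℝ≥0∞) ≠ ∞) {c : Kinf F}
    (hc : Kabs (Fintype.card F) c ≤ 1) :
    gnorm F (PowerSeries.mk fun k => c ^ k) ≤ 1 := by
  have h0 : ((Fintype.card F : ℕ):ℝ≥0∞) ≠ 0 := (zero_lt_one.trans hq).ne'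
  refine gnorm_le_iff.mpr fun i => ?_
  have : coeffT F i (PowerSeries.mk fun k => c ^ k) = c ^ i := PowerSeries.coeff_mk i _
  rw [this, Kabs_pow h0 ht]
  exact pow_le_one' hc i

lemma theta_inv : (theta F)⁻¹ = HahnSeries.single (1 : ℤ) (1 : F) := by
  symm
  apply eq_inv_of_mul_eq_one_right
  rw [theta, HahnSeries.single_mul_single]
  norm_num

lemma Kabs_c_le_one (i : ℕ) :
    Kabs (Fintype.card F) ((theta F)⁻¹ ^ Fintype.card F ^ i) ≤ 1 := by
  have hq : (1:ℝ≥0∞) ≤ ((Fintype.card F : ℕ):ℝ≥0∞) := by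
    exact_mod_cast Nat.one_le_iff_ne_zero.mpr Fintype.card_ne_zero
  rw [theta_inv, HahnSeries.single_pow, one_pow, Kabs_single one_ne_zero]
  calc ((Fintype.card F : ℕ):ℝ≥0∞) ^ (-((Fintype.card F ^ i : ℕ) • (1:ℤ)))
      ≤ ((Fintype.card F : ℕ):ℝ≥0∞) ^ (0:ℤ) := ENNReal.zpow_le_of_le hq (by simp)
  _ = 1 := zpow_zero _

end Aux3
section Aux4
set_option linter.unusedSectionVars false
variable {F}

lemma gnorm_omegaPartial_le (hq : 1 < ((Fintype.card F : ℕ):ℝ≥0∞))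
    (ht : ((Fintype.card F : ℕ):ℝ≥0∞) ≠ ∞) (n m N : ℕ) :
    gnorm F (omegaPartial F n m N) ≤ ((Fintype.card F : ℕ):ℝ≥0∞) ^ m := by
  unfold omegaPartial
  refine le_trans (gnorm_C_mul_le hq ht _ _) ?_
  have h1 : Kabs (Fintype.card F) ((-theta F) ^ m) = ((Fintype.card F : ℕ):ℝ≥0∞) ^ m := by
    rw [neg_theta_pow, Kabs_single (pow_ne_zero m (neg_ne_zero.mpr one_ne_zero))]
    rw [neg_neg, zpow_natCast]
  rw [h1]
  have h2 : gnorm F (∏ i ∈ Finset.range N,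
      (((1 - tt F * PowerSeries.C (R := Kinf F) ((theta F)⁻¹ ^ Fintype.card F ^ i)) ^ n)⁻¹ : TS F))
      ≤ 1 := by
    refine gnorm_prod_le_one hq ht fun i _ => ?_
    rw [geom_pow_inv]
    refine le_trans (gnorm_pow_le hq ht _ n) ?_
    exact pow_le_one' (gnorm_geom_le hq ht (Kabs_c_le_one i)) n
  calc ((Fintype.card F : ℕ):ℝ≥0∞) ^ m * gnorm F _ ≤ ((Fintype.card F : ℕ):ℝ≥0∞) ^ m * 1 :=
        mul_le_mul' le_rfl h2
  _ = _ := mul_one _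

lemma constantCoeff_omegaPartial (n m N : ℕ) :
    PowerSeries.constantCoeff (R := Kinf F) (omegaPartial F n m N) = (-theta F) ^ m := by
  unfold omegaPartial
  rw [map_mul, PowerSeries.constantCoeff_C, map_prod]
  have : ∀ i ∈ Finset.range N,
      PowerSeries.constantCoeff (R := Kinf F)
        ((((1 - tt F * PowerSeries.C (R := Kinf F) ((theta F)⁻¹ ^ Fintype.card F ^ i)) ^ n)⁻¹ : TS F))
      = 1 := by
    intro i _
    rw [PowerSeries.constantCoeff_inv, map_pow, map_sub, map_one, map_mul, tt,
      PowerSeries.constantCoeff_X, zero_mul, sub_zero, one_pow, inv_one]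
  rw [Finset.prod_congr rfl this, Finset.prod_const_one, mul_one]

lemma omegaPartial_char_pow (p n m N : ℕ) :
    omegaPartial F (p * n) (p * m) N = (omegaPartial F n m N) ^ p := by
  unfold omegaPartial
  rw [mul_pow, ← Finset.prod_pow]
  congr 1
  · rw [← map_pow, mul_comm p m, pow_mul]
  · refine Finset.prod_congr rfl fun i _ => ?_
    rw [geom_pow_inv, geom_pow_inv, ← pow_mul, mul_comm p n]

lemma polyT_eq_zero_of_gnorm_lt_one (hq1 : 1 ≤ ((Fintype.card F : ℕ):ℝ≥0∞))
    {R : Polynomial (Polynomial F)} (h : gnorm F (polyT F R) < 1) : polyT F R = 0 := by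
  have hcoeff : ∀ k, polyK F (R.coeff k) = 0 := by
    intro k
    have hk : Kabs (Fintype.card F) (polyK F (R.coeff k)) < 1 := by
      refine lt_of_le_of_lt ?_ h
      rw [← polyT_coeff]
      exact Kabs_coeff_le_gnorm k _
    by_contra hne
    have hR : R.coeff k ≠ 0 := fun h0 => hne (by rw [h0, map_zero])
    have hcoef : (polyK F (R.coeff k)).coeff (-(((R.coeff k).natDegree : ℕ) : ℤ)) ≠ 0 := by
      rw [polyK_coeff, if_pos (by omega), neg_neg, Int.toNat_natCast]
      exact Polynomial.leadingCoeff_ne_zero.mpr hR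
    have hne0 : polyK F (R.coeff k) ≠ 0 := by
      intro h0
      rw [h0] at hcoef
      exact hcoef rfl
    have hord : (polyK F (R.coeff k)).order ≤ -(((R.coeff k).natDegree : ℕ) : ℤ) :=
      HahnSeries.order_le_of_coeff_ne_zero hcoef
    have : (1:ℝ≥0∞) ≤ Kabs (Fintype.card F) (polyK F (R.coeff k)) := by
      rw [Kabs_of_ne hne0]
      calc (1:ℝ≥0∞) = ((Fintype.card F : ℕ):ℝ≥0∞) ^ (0:ℤ) := (zpow_zero _).symm
      _ ≤ _ := ENNReal.zpow_le_of_le hq1 (by omega)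
    exact absurd hk (not_lt.mpr this)
  apply PowerSeries.ext
  intro k
  rw [map_zero]
  exact (polyT_coeff R k).trans (hcoeff k)

lemma close_unique (hq1 : 1 ≤ ((Fintype.card F : ℕ):ℝ≥0∞)) {ω g1 g2 : TS F}
    (h1 : g1 ∈ PolyTT F) (h2 : g2 ∈ PolyTT F)
    (n1 : gnorm F (g1 - ω) < 1) (n2 : gnorm F (g2 - ω) < 1) : g1 = g2 := by
  obtain ⟨P1, rfl⟩ := h1
  obtain ⟨P2, rfl⟩ := h2
  have hz : polyT F (P1 - P2) = 0 := by
    refine polyT_eq_zero_of_gnorm_lt_one hq1 ?_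
    rw [map_sub]
    have : polyT F P1 - polyT F P2 = (polyT F P1 - ω) - (polyT F P2 - ω) := by ring
    rw [this]
    exact lt_of_le_of_lt (gnorm_sub_le hq1 _ _) (max_lt n1 n2)
  rw [map_sub] at hz
  exact sub_eq_zero.mp hz

end Aux4

/-- Let `n = m(q−1)` with `m ≥ 1`.  There is a unique polynomial
`g_n ∈ 𝔽[θ,t]` with `‖g_n − ω_n‖ < 1`; it satisfies `deg_θ g_n = m`, and
`g_{pn} = (g_n)^p`. -/
theorem statement13 (q p n m : ℕ) (hq : q = Fintype.card F) (hp : p = ringChar F)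
    (hm : 1 ≤ m) (hn : n = m * (q - 1))
    (ω : TS F) (hω : IsTate F ω) (hωc : TT F (omegaPartial F n m) ω)
    (ωp : TS F) (hωp : IsTate F ωp) (hωpc : TT F (omegaPartial F (p * n) (p * m)) ωp) :
    ∃ g ∈ PolyTT F, gnorm F (g - ω) < 1 ∧
      -- uniqueness
      (∀ g' ∈ PolyTT F, gnorm F (g' - ω) < 1 → g' = g) ∧
      -- `deg_θ g = m`
      (∃ P : Polynomial (Polynomial F), g = polyT F P ∧
        (∀ i, (P.coeff i).degree ≤ (m : ℕ)) ∧ (∃ i, (P.coeff i).degree = (m : ℕ))) ∧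
      -- `g_{pn} = (g_n)^p`
      (∀ gp ∈ PolyTT F, gnorm F (gp - ωp) < 1 → gp = g ^ p) := by
  subst hq hp
  classical
  have hcard : 1 < Fintype.card F := Fintype.one_lt_card
  have hQ1 : (1:ℝ≥0∞) < ((Fintype.card F : ℕ):ℝ≥0∞) := by exact_mod_cast hcard
  have hQ1' : (1:ℝ≥0∞) ≤ ((Fintype.card F : ℕ):ℝ≥0∞) := hQ1.le
  have hQt : ((Fintype.card F : ℕ):ℝ≥0∞) ≠ ∞ := ENNReal.natCast_ne_top _
  have hqinv : (((Fintype.card F : ℕ):ℝ≥0∞))⁻¹ < 1 := ENNReal.inv_lt_one.mpr hQ1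
  -- choose a common index N for both convergence statements
  have hc1 : Tendsto (fun N => gnorm F (ω - omegaPartial F n m N)) atTop (nhds 0) := hωc
  have hc2 : Tendsto (fun N => gnorm F (ωp - omegaPartial F (ringChar F * n)
      (ringChar F * m) N)) atTop (nhds 0) := hωpc
  obtain ⟨N, hN1, hN2⟩ :
      ∃ N, gnorm F (ω - omegaPartial F n m N) < 1 ∧
        gnorm F (ωp - omegaPartial F (ringChar F * n) (ringChar F * m) N) < 1 :=
    ((hc1.eventually_lt_const zero_lt_one).and (hc2.eventually_lt_const zero_lt_one)).exists
  -- gnorm ω ≤ q^m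
  have hωn : gnorm F ω ≤ ((Fintype.card F : ℕ):ℝ≥0∞) ^ m := by
    have h1 : ω = (ω - omegaPartial F n m N) + omegaPartial F n m N := by ring
    rw [h1]
    refine le_trans (gnorm_add_le hQ1' _ _) (max_le ?_ (gnorm_omegaPartial_le hQ1 hQt n m N))
    refine le_trans hN1.le ?_
    calc (1:ℝ≥0∞) = 1 ^ m := (one_pow m).symm
    _ ≤ _ := pow_le_pow_left' hQ1' m
  have hcoef_all : ∀ k, Kabs (Fintype.card F) (coeffT F k ω)
      ≤ ((Fintype.card F : ℕ):ℝ≥0∞) ^ ((m:ℕ) : ℤ) := by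
    intro k
    rw [zpow_natCast]
    exact le_trans (Kabs_coeff_le_gnorm k ω) hωn
  -- choose K₀ beyond which the coefficients are small
  have hT : Tendsto (fun i => Kabs (Fintype.card F) (coeffT F i ω)) atTop (nhds 0) := hω
  obtain ⟨K0, hK0⟩ := eventually_atTop.mp (hT.eventually_lt_const zero_lt_one)
  -- the polynomial part of ω
  set P : Polynomial (Polynomial F) :=
    ∑ k ∈ Finset.range (K0 + 1), Polynomial.monomial k (truncB m (coeffT F k ω)) with hPdef
  have hPcoeff : ∀ k, P.coeff k = if k ≤ K0 then truncB m (coeffT F k ω) else 0 := by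
    intro k
    rw [hPdef, Polynomial.finset_sum_coeff]
    have h2 : ∀ j ∈ Finset.range (K0 + 1),
        (Polynomial.monomial j (truncB m (coeffT F j ω))).coeff k
        = if j = k then truncB m (coeffT F j ω) else 0 :=
      fun j _ => Polynomial.coeff_monomial
    rw [Finset.sum_congr rfl h2, Finset.sum_ite_eq' (Finset.range (K0 + 1))]
    simp only [Finset.mem_range]
    split <;> split <;> first | rfl | omega
  have hmem : polyT F P ∈ PolyTT F := ⟨P, rfl⟩
  have hclose1 : gnorm F (polyT F P - ω) < 1 := by
    refine lt_of_le_of_lt (gnorm_le_iff.mpr fun k => ?_) hqinv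
    rw [coeffT_sub, polyT_coeff, hPcoeff k]
    by_cases hk : k ≤ K0
    · rw [if_pos hk]
      have hvan : ∀ z : ℤ, z < -((m:ℕ):ℤ) → (coeffT F k ω).coeff z = 0 :=
        fun z hz => Kabs_coeff_vanish hQ1 hQt (hcoef_all k) hz
      have hz := Kabs_le_inv hQ1' (sub_polyK_truncB_coeff m hvan)
      have heq : polyK F (truncB m (coeffT F k ω)) - coeffT F k ω
          = -(coeffT F k ω - polyK F (truncB m (coeffT F k ω))) := by ring
      rw [heq, Kabs_neg]
      exact hz
    · rw [if_neg hk, map_zero, zero_sub, Kabs_neg]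
      exact Kabs_lt_one_le_inv hQ1' (hK0 k (by omega))
  have hgω : gnorm F (ω - polyT F P) < 1 := by
    have : ω - polyT F P = -(polyT F P - ω) := by ring
    rwa [this, gnorm_neg]
  refine ⟨polyT F P, hmem, hclose1,
    fun g' hg' hn' => close_unique hQ1' hg' hmem hn' hclose1, ⟨P, rfl, ?_, ⟨0, ?_⟩⟩, ?_⟩
  · -- degrees ≤ m
    intro i
    rw [hPcoeff i]
    split
    · exact truncB_degree_le m _
    · rw [Polynomial.degree_zero]
      exact bot_le
  · -- degree of the constant coefficient is exactly m
    rw [hPcoeff 0, if_pos (Nat.zero_le K0)]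
    have hsmall : Kabs (Fintype.card F) (coeffT F 0 ω - (-theta F) ^ m) < 1 := by
      have h2 : coeffT F 0 (omegaPartial F n m N) = (-theta F) ^ m := by
        unfold coeffT
        rw [PowerSeries.coeff_zero_eq_constantCoeff]
        exact constantCoeff_omegaPartial n m N
      have h1 : coeffT F 0 ω - (-theta F) ^ m = coeffT F 0 (ω - omegaPartial F n m N) := by
        rw [coeffT_sub, h2]
      rw [h1]
      exact lt_of_le_of_lt (Kabs_coeff_le_gnorm 0 _) hN1
    have hcoeq : ∀ z : ℤ, z ≤ 0 →
        (coeffT F 0 ω).coeff z = ((-theta F) ^ m : Kinf F).coeff z := by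
      intro z hz
      have h3 := Kabs_lt_one_coeff hQ1' hsmall hz
      rw [HahnSeries.coeff_sub] at h3
      exact sub_eq_zero.mp h3
    have htr : truncB m (coeffT F 0 ω) = Polynomial.monomial m ((-1:F) ^ m) := by
      apply Polynomial.ext
      intro i
      rw [truncB_coeff, Polynomial.coeff_monomial]
      by_cases him : i ≤ m
      · rw [if_pos him, hcoeq _ (by omega), neg_theta_pow, HahnSeries.coeff_single]
        simp only [show (-(i:ℤ) = -(m:ℤ)) ↔ (m = i) from by omega]
      · rw [if_neg him, if_neg (by omega)]
    rw [htr]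
    exact Polynomial.degree_monomial m (pow_ne_zero m (neg_ne_zero.mpr one_ne_zero))
  · -- Frobenius compatibility
    haveI hFact : Fact (Nat.Prime (ringChar F)) := ⟨CharP.char_is_prime F (ringChar F)⟩
    haveI hcharTS : CharP (TS F) (ringChar F) :=
      charP_of_injective_ringHom
        (RingHom.injective ((PowerSeries.C (R := Kinf F)).comp (HahnSeries.C : F →+* Kinf F)))
        (ringChar F)
    intro gp hgp hngp
    have hg_pow_mem : (polyT F P) ^ (ringChar F) ∈ PolyTT F :=
      ⟨P ^ (ringChar F), map_pow _ _ _⟩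
    have hclose2 : gnorm F ((polyT F P) ^ (ringChar F) - ωp) < 1 := by
      have hsplit : (polyT F P) ^ (ringChar F) - ωp
          = ((polyT F P) ^ (ringChar F) - (omegaPartial F n m N) ^ (ringChar F))
            + ((omegaPartial F n m N) ^ (ringChar F) - ωp) := by ring
      rw [hsplit]
      refine lt_of_le_of_lt (gnorm_add_le hQ1' _ _) (max_lt ?_ ?_)
      · rw [← sub_pow_char (polyT F P) (omegaPartial F n m N)]
        refine lt_of_le_of_lt (gnorm_pow_le hQ1 hQt _ _) ?_
        have hdiff : gnorm F (polyT F P - omegaPartial F n m N) < 1 := by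
          have h4 : polyT F P - omegaPartial F n m N
              = (polyT F P - ω) + (ω - omegaPartial F n m N) := by ring
          rw [h4]
          exact lt_of_le_of_lt (gnorm_add_le hQ1' _ _) (max_lt hclose1 hN1)
        exact pow_lt_one₀ (zero_le (a := gnorm F _)) hdiff hFact.out.ne_zero
      · have h5 : (omegaPartial F n m N) ^ (ringChar F) - ωp
            = -(ωp - omegaPartial F (ringChar F * n) (ringChar F * m) N) := by
          rw [omegaPartial_char_pow]
          ring
        rw [h5, gnorm_neg]
        exact hN2
    exact close_unique hQ1' hgp hg_pow_mem hngp hclose2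

end Carlitz
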